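/- Let p be an integer-valued supermodular set-function on the subsets of a nonempty finite set S with p(∅) = 0, and assume Ḃ(p) is nonempty. Then an element m of Ḃ(p) minimizes the difference-sum Δ(z) = Σ_{(s,t) : s ≠ t} |z(s) − z(t)| (the sum taken over all ordered pairs of distinct elements of S) over Ḃ(p) if and only if m is a decreasingly minimal element of Ḃ(p). -/

import Mathlib

open Finset

variable {α : Type*}

/-- Integer-valued supermodular set-function. -/
def Supermodular [DecidableEq α] (p : Finset α → ℤ) : Prop :=
  ∀ X Y : Finset α, p X + p Y ≤ p (X ∩ Y) + p (X ∪ Y)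

/-- The M-convex set `Ḃ(p)` of integral elements of the base-polyhedron `B'(p)`:
all `m : α → ℤ` with `m̃(X) ≥ p(X)` for every `X` and `m̃(S) = p(S)`. -/
def Bdot [Fintype α] (p : Finset α → ℤ) : Set (α → ℤ) :=
  {m | (∀ X : Finset α, p X ≤ ∑ s ∈ X, m s) ∧ (∑ s, m s) = p Finset.univ}

/-- `x↓`: the values of `x` arranged in nonincreasing order. -/
def sortedDesc [Fintype α] (x : α → ℤ) : List ℤ :=
  ((Finset.univ.val.map x).sort (· ≤ ·)).reverse

/-- `x↑`: the values of `x` arranged in nondecreasing order. -/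
def sortedAsc [Fintype α] (x : α → ℤ) : List ℤ :=
  (Finset.univ.val.map x).sort (· ≤ ·)

/-- `x ≤_dec y`: `x↓` is lexicographically less than or equal to `y↓`. -/
def DecLE [Fintype α] (x y : α → ℤ) : Prop :=
  sortedDesc x = sortedDesc y ∨ List.Lex (· < ·) (sortedDesc x) (sortedDesc y)

/-- `x ≤_inc y`: `x↑` is lexicographically less than or equal to `y↑`. -/
def IncLE [Fintype α] (x y : α → ℤ) : Prop :=
  sortedAsc x = sortedAsc y ∨ List.Lex (· < ·) (sortedAsc x) (sortedAsc y)

/-- `m` is a decreasingly minimal element of `Bdot p`. -/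
def DecMin [Fintype α] (p : Finset α → ℤ) (m : α → ℤ) : Prop :=
  m ∈ Bdot p ∧ ∀ y ∈ Bdot p, DecLE m y

/-! ### auxiliary material -/

/-- transfer one unit from `s` to `t` -/
def tw [DecidableEq α] (x : α → ℤ) (s t : α) : α → ℤ :=
  Function.update (Function.update x s (x s - 1)) t (x t + 1)

section TW
variable [DecidableEq α] {x : α → ℤ} {s t : α}

lemma tw_apply_s (hst : s ≠ t) : tw x s t s = x s - 1 := by
  simp [tw, Function.update_of_ne hst]

lemma tw_apply_t : tw x s t t = x t + 1 := by
  simp [tw]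

lemma tw_apply_other {u : α} (hus : u ≠ s) (hut : u ≠ t) : tw x s t u = x u := by
  simp [tw, Function.update_of_ne hut, Function.update_of_ne hus]

lemma sum_update_eq (f : α → ℤ) (a : α) (v : ℤ) (X : Finset α) :
    ∑ u ∈ X, Function.update f a v u = (∑ u ∈ X, f u) + (if a ∈ X then v - f a else 0) := by
  by_cases h : a ∈ X
  · rw [Finset.sum_update_of_mem h, if_pos h]
    have h2 : f a + ∑ x ∈ X.erase a, f x = ∑ u ∈ X, f u := Finset.add_sum_erase X f h
    rw [Finset.sdiff_singleton_eq_erase]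
    omega
  · rw [if_neg h, add_zero]
    exact Finset.sum_congr rfl fun u hu => Function.update_of_ne (by rintro rfl; exact h hu) _ _

lemma sum_tw (hst : s ≠ t) (X : Finset α) :
    ∑ u ∈ X, tw x s t u =
      (∑ u ∈ X, x u) + (if s ∈ X then -1 else 0) + (if t ∈ X then 1 else 0) := by
  unfold tw
  rw [sum_update_eq, sum_update_eq]
  have : Function.update x s (x s - 1) t = x t := Function.update_of_ne (Ne.symm hst) _ _
  rw [this]
  split_ifs <;> ring

end TW

section Lists

/-- key lex lemma via counts -/
lemma lex_of_count : ∀ (L L' : List ℤ), L.Pairwise (fun a b => b ≤ a) → L'.Pairwise (fun a b => b ≤ a) →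
    ∀ v : ℤ, L'.count v < L.count v → (∀ w, v < w → L'.count w = L.count w) →
    List.Lex (· < ·) L' L := by
  intro L
  induction L with
  | nil => intro L' _ _ v hv _; simp at hv
  | cons h T ih =>
    intro L' hL hL' v hv hw
    match L' with
    | [] => exact List.Lex.nil
    | h' :: T' =>
      have hhl := List.pairwise_cons.mp hL
      have hhl' := List.pairwise_cons.mp hL'
      have hle : h' ≤ h := by
        by_contra hgt
        push_neg at hgt
        have hmax : ∀ z : ℤ, z ∈ h :: T → z ≤ h := by
          intro z hz
          rcases List.mem_cons.mp hz with rfl | hz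
          · exact le_refl _
          · exact hhl.1 _ hz
        rcases lt_or_ge v h' with hvh | hvh
        · have e1 : (h' :: T').count h' = (h :: T).count h' := hw _ hvh
          have e2 : 0 < (h :: T).count h' := by
            rw [← e1]; simp [List.count_cons]
          have := hmax _ (List.count_pos_iff.mp e2)
          omega
        · have hvL : 0 < (h :: T).count v := lt_of_le_of_lt (Nat.zero_le _) hv
          have := hmax _ (List.count_pos_iff.mp hvL)
          omega
      rcases lt_or_eq_of_le hle with hlt | heq
      · exact List.Lex.rel hlt
      · subst heq
        apply List.Lex.cons
        apply ih T' hhl.2 hhl'.2 v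
        · simp only [List.count_cons] at hv
          split_ifs at hv <;> omega
        · intro w hw'
          have := hw w hw'
          simp only [List.count_cons] at this
          split_ifs at this <;> omega

end Lists

section SortedDesc
variable [Fintype α] [DecidableEq α] {x : α → ℤ} {s t : α}

lemma count_sortedDesc (x : α → ℤ) (v : ℤ) :
    (sortedDesc x).count v = Multiset.count v (Finset.univ.val.map x) := by
  unfold sortedDesc
  rw [List.count_reverse, ← Multiset.coe_count, Multiset.sort_eq]

lemma sortedDesc_sorted (x : α → ℤ) : (sortedDesc x).Pairwise (fun a b => b ≤ a) := by
  unfold sortedDesc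
  rw [List.pairwise_reverse]
  exact Multiset.pairwise_sort _ _

lemma map_univ_split (f : α → ℤ) (hst : s ≠ t) :
    Finset.univ.val.map f =
      f s ::ₘ f t ::ₘ ((Finset.univ.val.erase s).erase t).map f := by
  have hs : s ∈ (Finset.univ : Finset α).val := Finset.mem_univ_val s
  have ht : t ∈ (Finset.univ : Finset α).val.erase s :=
    (Multiset.Nodup.mem_erase_iff (Finset.univ.nodup)).mpr ⟨Ne.symm hst, Finset.mem_univ_val t⟩
  conv_lhs => rw [← Multiset.cons_erase hs, Multiset.map_cons,
    ← Multiset.cons_erase ht, Multiset.map_cons]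

lemma map_tw_split (hst : s ≠ t) :
    Finset.univ.val.map (tw x s t) =
      (x s - 1) ::ₘ (x t + 1) ::ₘ ((Finset.univ.val.erase s).erase t).map x := by
  rw [map_univ_split (tw x s t) hst, tw_apply_s hst, tw_apply_t]
  congr 2
  apply Multiset.map_congr rfl
  intro u hu
  have h1 : (Finset.univ : Finset α).val.Nodup := Finset.univ.nodup
  have h2 := (Multiset.Nodup.mem_erase_iff (h1.erase s)).mp hu
  have h3 := (Multiset.Nodup.mem_erase_iff h1).mp h2.2
  exact tw_apply_other h3.1 h2.1

lemma sortedDesc_tw_lex (hst : s ≠ t) (h : x t + 2 ≤ x s) :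
    List.Lex (· < ·) (sortedDesc (tw x s t)) (sortedDesc x) := by
  apply lex_of_count _ _ (sortedDesc_sorted x) (sortedDesc_sorted (tw x s t)) (x s)
  · rw [count_sortedDesc, count_sortedDesc, map_tw_split hst, map_univ_split x hst,
      Multiset.count_cons, Multiset.count_cons, Multiset.count_cons, Multiset.count_cons]
    split_ifs <;> omega
  · intro w hw
    rw [count_sortedDesc, count_sortedDesc, map_tw_split hst, map_univ_split x hst,
      Multiset.count_cons, Multiset.count_cons, Multiset.count_cons, Multiset.count_cons]
    split_ifs <;> omega

lemma decLE_tw (hst : s ≠ t) (h : x t + 1 ≤ x s) : DecLE (tw x s t) x := by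
  rcases eq_or_lt_of_le h with heq | hlt
  · left
    have : Finset.univ.val.map (tw x s t) = Finset.univ.val.map x := by
      rw [map_tw_split hst, map_univ_split x hst, ← heq]
      rw [Multiset.cons_swap]
      congr 2
      omega
    unfold sortedDesc
    rw [this]
  · exact Or.inr (sortedDesc_tw_lex hst (by omega))

lemma decLE_trans {a b c : α → ℤ} (h1 : DecLE a b) (h2 : DecLE b c) : DecLE a c := by
  rcases h1 with e1 | l1 <;> rcases h2 with e2 | l2
  · exact Or.inl (e1.trans e2)
  · exact Or.inr (e1 ▸ l2)
  · exact Or.inr (e2 ▸ l1)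
  · exact Or.inr (List.lex_trans (fun h1 h2 => lt_trans h1 h2) l1 l2)

end SortedDesc

/-! ### the difference-sum -/

section GSum
variable [Fintype α] [DecidableEq α]

/-- sum over all ordered pairs (including the diagonal, which contributes 0) -/
def Gsum (x : α → ℤ) : ℤ := ∑ u, ∑ v, |x u - x v|

lemma delta_eq_Gsum (x : α → ℤ) :
    ∑ q ∈ Finset.univ.offDiag, |x q.1 - x q.2| = Gsum x := by
  unfold Gsum
  rw [← Finset.sum_product']
  rw [← Finset.diag_union_offDiag (Finset.univ : Finset α),
    Finset.sum_union (Finset.disjoint_diag_offDiag _)]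
  have : ∑ q ∈ (Finset.univ : Finset α).diag, |x q.1 - x q.2| = 0 := by
    apply Finset.sum_eq_zero
    intro q hq
    rw [(Finset.mem_diag.mp hq).2]
    simp
  rw [this, zero_add]

variable {x : α → ℤ} {s t : α}

lemma sum_split (hst : s ≠ t) (f : α → ℤ) :
    ∑ u, f u = f s + f t + ∑ u ∈ (Finset.univ.erase s).erase t, f u := by
  have h1 : f s + ∑ u ∈ Finset.univ.erase s, f u = ∑ u, f u :=
    Finset.add_sum_erase _ f (Finset.mem_univ s)
  have h2 : f t + ∑ u ∈ (Finset.univ.erase s).erase t, f u = ∑ u ∈ Finset.univ.erase s, f u :=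
    Finset.add_sum_erase _ f (Finset.mem_erase.mpr ⟨Ne.symm hst, Finset.mem_univ t⟩)
  omega

lemma Gsum_expand (z : α → ℤ) (hst : s ≠ t) :
    Gsum z = 2 * |z s - z t| +
      2 * (∑ u ∈ (Finset.univ.erase s).erase t, (|z u - z s| + |z u - z t|)) +
      ∑ u ∈ (Finset.univ.erase s).erase t, ∑ v ∈ (Finset.univ.erase s).erase t, |z u - z v| := by
  unfold Gsum
  set E := (Finset.univ.erase s).erase t with hE
  rw [sum_split hst (fun u => ∑ v, |z u - z v|)]
  rw [sum_split hst (fun v => |z s - z v|), sum_split hst (fun v => |z t - z v|)]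
  have h3 : ∀ u, ∑ v, |z u - z v| = |z u - z s| + |z u - z t| + ∑ v ∈ E, |z u - z v| :=
    fun u => sum_split hst (fun v => |z u - z v|)
  rw [Finset.sum_congr rfl (fun u _ => h3 u), Finset.sum_add_distrib, Finset.sum_add_distrib]
  have e1 : |z s - z s| = 0 := by simp
  have e2 : |z t - z t| = 0 := by simp
  have e3 : |z t - z s| = |z s - z t| := abs_sub_comm _ _
  have e4 : ∑ v ∈ E, |z s - z v| = ∑ v ∈ E, |z v - z s| :=
    Finset.sum_congr rfl fun v _ => abs_sub_comm _ _
  have e5 : ∑ v ∈ E, |z t - z v| = ∑ v ∈ E, |z v - z t| :=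
    Finset.sum_congr rfl fun v _ => abs_sub_comm _ _
  rw [e1, e2, e3, e4, e5]
  ring

lemma abs_key {a b c : ℤ} (h : b + 1 ≤ a) :
    |c - (a - 1)| + |c - (b + 1)| ≤ |c - a| + |c - b| := by
  rcases abs_cases (c - (a - 1)) with ⟨h1, _⟩ | ⟨h1, _⟩ <;>
  rcases abs_cases (c - (b + 1)) with ⟨h2, _⟩ | ⟨h2, _⟩ <;>
  rcases abs_cases (c - a) with ⟨h3, _⟩ | ⟨h3, _⟩ <;>
  rcases abs_cases (c - b) with ⟨h4, _⟩ | ⟨h4, _⟩ <;>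
  omega

lemma tw_pair_eqs (hst : s ≠ t) :
    tw x s t s = x s - 1 ∧ tw x s t t = x t + 1 := ⟨tw_apply_s hst, tw_apply_t⟩

lemma Gsum_tw_le (hst : s ≠ t) (h : x t + 1 ≤ x s) : Gsum (tw x s t) ≤ Gsum x := by
  rw [Gsum_expand (tw x s t) hst, Gsum_expand x hst]
  set E := (Finset.univ.erase s).erase t with hE
  have hmem : ∀ u ∈ E, tw x s t u = x u := by
    intro u hu
    have h2 := Finset.mem_erase.mp hu
    have h3 := Finset.mem_erase.mp h2.2
    exact tw_apply_other h3.1 h2.1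
  have hpair : |tw x s t s - tw x s t t| ≤ |x s - x t| := by
    rw [tw_apply_s hst, tw_apply_t]
    rcases abs_cases (x s - 1 - (x t + 1)) with ⟨h1, _⟩ | ⟨h1, _⟩ <;>
    rcases abs_cases (x s - x t) with ⟨h2, _⟩ | ⟨h2, _⟩ <;> omega
  have hmid : ∑ u ∈ E, (|tw x s t u - tw x s t s| + |tw x s t u - tw x s t t|) ≤
      ∑ u ∈ E, (|x u - x s| + |x u - x t|) := by
    apply Finset.sum_le_sum
    intro u hu
    rw [hmem u hu, tw_apply_s hst, tw_apply_t]
    exact abs_key h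
  have hlast : ∑ u ∈ E, ∑ v ∈ E, |tw x s t u - tw x s t v| =
      ∑ u ∈ E, ∑ v ∈ E, |x u - x v| := by
    apply Finset.sum_congr rfl
    intro u hu
    apply Finset.sum_congr rfl
    intro v hv
    rw [hmem u hu, hmem v hv]
  omega

lemma Gsum_tw_lt (hst : s ≠ t) (h : x t + 2 ≤ x s) : Gsum (tw x s t) < Gsum x := by
  rw [Gsum_expand (tw x s t) hst, Gsum_expand x hst]
  set E := (Finset.univ.erase s).erase t with hE
  have hmem : ∀ u ∈ E, tw x s t u = x u := by
    intro u hu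
    have h2 := Finset.mem_erase.mp hu
    have h3 := Finset.mem_erase.mp h2.2
    exact tw_apply_other h3.1 h2.1
  have hpair : |tw x s t s - tw x s t t| < |x s - x t| := by
    rw [tw_apply_s hst, tw_apply_t]
    rcases abs_cases (x s - 1 - (x t + 1)) with ⟨h1, _⟩ | ⟨h1, _⟩ <;>
    rcases abs_cases (x s - x t) with ⟨h2, _⟩ | ⟨h2, _⟩ <;> omega
  have hmid : ∑ u ∈ E, (|tw x s t u - tw x s t s| + |tw x s t u - tw x s t t|) ≤
      ∑ u ∈ E, (|x u - x s| + |x u - x t|) := by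
    apply Finset.sum_le_sum
    intro u hu
    rw [hmem u hu, tw_apply_s hst, tw_apply_t]
    exact abs_key (by omega)
  have hlast : ∑ u ∈ E, ∑ v ∈ E, |tw x s t u - tw x s t v| =
      ∑ u ∈ E, ∑ v ∈ E, |x u - x v| := by
    apply Finset.sum_congr rfl
    intro u hu
    apply Finset.sum_congr rfl
    intro v hv
    rw [hmem u hu, hmem v hv]
  omega

end GSum

/-! ### base polyhedron: tight sets and the simultaneous exchange lemma -/

section Base
variable [Fintype α] [DecidableEq α] {p : Finset α → ℤ}

lemma sum_inter_union (f : α → ℤ) (X Y : Finset α) :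
    (∑ u ∈ X ∩ Y, f u) + (∑ u ∈ X ∪ Y, f u) = (∑ u ∈ X, f u) + (∑ u ∈ Y, f u) := by
  have h1 : (∑ u ∈ (X ∪ Y) ∩ X, f u) + (∑ u ∈ (X ∪ Y) \ X, f u) = ∑ u ∈ X ∪ Y, f u :=
    Finset.sum_inter_add_sum_sdiff _ _ _
  have h2 : (∑ u ∈ Y ∩ X, f u) + (∑ u ∈ Y \ X, f u) = ∑ u ∈ Y, f u :=
    Finset.sum_inter_add_sum_sdiff _ _ _
  have e1 : (X ∪ Y) ∩ X = X := by ext a; simp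
  have e2 : (X ∪ Y) \ X = Y \ X := by ext a; simp; tauto
  have e3 : Y ∩ X = X ∩ Y := Finset.inter_comm Y X
  rw [e1, e2] at h1
  rw [e3] at h2
  omega

lemma tight_inter_union (hp : Supermodular p) {m : α → ℤ} (hm : m ∈ Bdot p) {X Y : Finset α}
    (hX : ∑ u ∈ X, m u = p X) (hY : ∑ u ∈ Y, m u = p Y) :
    (∑ u ∈ X ∩ Y, m u = p (X ∩ Y)) ∧ (∑ u ∈ X ∪ Y, m u = p (X ∪ Y)) := by
  have h1 := hm.1 (X ∩ Y)
  have h2 := hm.1 (X ∪ Y)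
  have h3 := sum_inter_union m X Y
  have h4 := hp X Y
  omega

/-- simultaneous exchange -/
lemma simExch (hp : Supermodular p) (h0 : p ∅ = 0) {m y : α → ℤ}
    (hm : m ∈ Bdot p) (hy : y ∈ Bdot p) {s : α} (hs : y s < m s) :
    ∃ t, t ≠ s ∧ m t < y t ∧ tw m s t ∈ Bdot p ∧ tw y t s ∈ Bdot p := by
  classical
  -- the smallest m-tight set containing s
  set F : Finset (Finset α) :=
    (Finset.univ : Finset (Finset α)).filter (fun X => s ∈ X ∧ ∑ u ∈ X, m u = p X) with hF
  set T : Finset α := F.inf id with hT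
  have hTprop : s ∈ T ∧ ∑ u ∈ T, m u = p T := by
    apply Finset.inf_induction (p := fun Z : Finset α => s ∈ Z ∧ ∑ u ∈ Z, m u = p Z)
    · rw [Finset.top_eq_univ]
      exact ⟨Finset.mem_univ s, hm.2⟩
    · intro A hA B hB
      rw [inf_eq_inter]
      exact ⟨Finset.mem_inter.mpr ⟨hA.1, hB.1⟩, (tight_inter_union hp hm hA.2 hB.2).1⟩
    · intro X hX
      exact (Finset.mem_filter.mp hX).2
  have hTmin : ∀ X : Finset α, s ∈ X → ∑ u ∈ X, m u = p X → T ⊆ X := by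
    intro X h1 h2
    have hXF : X ∈ F := Finset.mem_filter.mpr ⟨Finset.mem_univ X, h1, h2⟩
    exact (Finset.inf_le hXF : T ≤ X)
  -- there is t ∈ T with m t < y t and such that every y-tight set containing t contains s
  have hchoose : ∃ t ∈ T, m t < y t ∧ ∀ X : Finset α, t ∈ X → (∑ u ∈ X, y u = p X) → s ∈ X := by
    by_contra hc
    push_neg at hc
    -- union of all y-tight sets avoiding s
    set G : Finset (Finset α) :=
      (Finset.univ : Finset (Finset α)).filter (fun X => s ∉ X ∧ ∑ u ∈ X, y u = p X) with hG
    set U : Finset α := G.sup id with hU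
    have hUprop : s ∉ U ∧ ∑ u ∈ U, y u = p U := by
      apply Finset.sup_induction (p := fun Z : Finset α => s ∉ Z ∧ ∑ u ∈ Z, y u = p Z)
      · simp [Finset.bot_eq_empty, h0]
      · intro A hA B hB
        rw [sup_eq_union]
        refine ⟨fun hmem => ?_, (tight_inter_union hp hy hA.2 hB.2).2⟩
        rcases Finset.mem_union.mp hmem with h | h
        · exact hA.1 h
        · exact hB.1 h
      · intro X hX
        exact (Finset.mem_filter.mp hX).2
    have hDU : ∀ t ∈ T, m t < y t → t ∈ U := by
      intro t ht hmt
      obtain ⟨X, hX1, hX2, hX3⟩ := hc t ht hmt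
      exact Finset.mem_sup.mpr ⟨X, Finset.mem_filter.mpr ⟨Finset.mem_univ X, hX3, hX2⟩, hX1⟩
    -- the contradiction
    have e1 : (∑ u ∈ T ∩ U, m u) + (∑ u ∈ T \ U, m u) = ∑ u ∈ T, m u :=
      Finset.sum_inter_add_sum_sdiff _ _ _
    have e2 : ∑ u ∈ T \ U, y u < ∑ u ∈ T \ U, m u := by
      apply Finset.sum_lt_sum
      · intro u hu
        have h2 := Finset.mem_sdiff.mp hu
        by_contra hgt
        exact h2.2 (hDU u h2.1 (by omega))
      · exact ⟨s, Finset.mem_sdiff.mpr ⟨hTprop.1, hUprop.1⟩, hs⟩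
    have e3 : (∑ u ∈ T \ U, y u) + (∑ u ∈ U, y u) = ∑ u ∈ T ∪ U, y u := by
      rw [← Finset.sum_union Finset.sdiff_disjoint, Finset.sdiff_union_self_eq_union]
    have e4 := hy.1 (T ∪ U)
    have e5 := hm.1 (T ∩ U)
    have e6 := hp T U
    have e7 := hTprop.2
    have e8 := hUprop.2
    omega
  obtain ⟨t, htT, hmt, htight⟩ := hchoose
  have hts : t ≠ s := by rintro rfl; omega
  refine ⟨t, hts, hmt, (⟨?_, ?_⟩ : _ ∧ _), (⟨?_, ?_⟩ : _ ∧ _)⟩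
  · -- constraints for tw m s t
    intro X
    rw [sum_tw (Ne.symm hts) X]
    have h1 := hm.1 X
    by_cases hsX : s ∈ X <;> by_cases htX : t ∈ X
    · simp only [if_pos hsX, if_pos htX]; omega
    · -- s ∈ X, t ∉ X : X cannot be m-tight
      simp only [if_pos hsX, if_neg htX]
      by_contra hcon
      push_neg at hcon
      have : ∑ u ∈ X, m u = p X := by omega
      exact htX (hTmin X hsX this htT)
    · simp only [if_neg hsX, if_pos htX]; omega
    · simp only [if_neg hsX, if_neg htX]; omega
  · -- total sum for tw m s t
    rw [sum_tw (Ne.symm hts) Finset.univ]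
    have := hm.2
    simp only [Finset.mem_univ, if_true]
    omega
  · -- constraints for tw y t s
    intro X
    rw [sum_tw hts X]
    have h1 := hy.1 X
    by_cases hsX : s ∈ X <;> by_cases htX : t ∈ X
    · simp only [if_pos hsX, if_pos htX]; omega
    · simp only [if_pos hsX, if_neg htX]; omega
    · -- t ∈ X, s ∉ X : X cannot be y-tight
      simp only [if_neg hsX, if_pos htX]
      by_contra hcon
      push_neg at hcon
      have : ∑ u ∈ X, y u = p X := by omega
      exact hsX (htight X htX this)
    · simp only [if_neg hsX, if_neg htX]; omega
  · rw [sum_tw hts Finset.univ]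
    have := hy.2
    simp only [Finset.mem_univ, if_true]
    omega

end Base

/-! ### local optimality implies global optimality -/

section Main
variable [Fintype α] [DecidableEq α] {p : Finset α → ℤ}

lemma noStep_global (hp : Supermodular p) (h0 : p ∅ = 0) {m : α → ℤ} (hm : m ∈ Bdot p)
    (hns : ∀ s t : α, s ≠ t → m t + 2 ≤ m s → tw m s t ∉ Bdot p) :
    ∀ k : ℕ, ∀ y ∈ Bdot p, (∑ u, |m u - y u|) ≤ (k : ℤ) → DecLE m y ∧ Gsum m ≤ Gsum y := by
  intro k
  induction k with
  | zero =>
    intro y hy hk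
    have hzero : ∀ u, |m u - y u| = 0 := by
      intro u
      have h1 : |m u - y u| ≤ ∑ u, |m u - y u| :=
        Finset.single_le_sum (f := fun u => |m u - y u|) (fun i _ => abs_nonneg _) (Finset.mem_univ u)
      have h2 : (0:ℤ) ≤ |m u - y u| := abs_nonneg _
      simp only [Nat.cast_zero] at hk
      omega
    have : m = y := by
      funext u
      have := abs_eq_zero.mp (hzero u)
      omega
    subst this
    exact ⟨Or.inl rfl, le_refl _⟩
  | succ k ih =>
    intro y hy hk
    by_cases hmy : m = y
    · subst hmy
      exact ⟨Or.inl rfl, le_refl _⟩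
    · have hex : ∃ s, y s < m s := by
        by_contra hc
        push_neg at hc
        obtain ⟨s0, hs0⟩ := Function.ne_iff.mp hmy
        have hlt : ∑ u, m u < ∑ u, y u :=
          Finset.sum_lt_sum (fun u _ => hc u)
            ⟨s0, Finset.mem_univ _, lt_of_le_of_ne (hc s0) hs0⟩
        rw [hm.2, hy.2] at hlt
        exact lt_irrefl _ hlt
      obtain ⟨s, hs⟩ := hex
      obtain ⟨t, hts, hmt, hmB, hyB⟩ := simExch hp h0 hm hy hs
      have hgap : m s ≤ m t + 1 := by
        by_contra hg
        push_neg at hg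
        exact hns s t (Ne.symm hts) (by omega) hmB
      have hyy : y s + 1 ≤ y t := by omega
      have hdec : DecLE (tw y t s) y := decLE_tw hts hyy
      have hG : Gsum (tw y t s) ≤ Gsum y := Gsum_tw_le hts hyy
      have hdist : (∑ u, |m u - tw y t s u|) + 2 = ∑ u, |m u - y u| := by
        rw [sum_split (Ne.symm hts) (fun u => |m u - tw y t s u|),
          sum_split (Ne.symm hts) (fun u => |m u - y u|)]
        have h1 : tw y t s s = y s + 1 := tw_apply_t
        have h2 : tw y t s t = y t - 1 := tw_apply_s hts
        have h3 : ∑ u ∈ (Finset.univ.erase s).erase t, |m u - tw y t s u| =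
            ∑ u ∈ (Finset.univ.erase s).erase t, |m u - y u| := by
          apply Finset.sum_congr rfl
          intro u hu
          have hu2 := Finset.mem_erase.mp hu
          have hu3 := Finset.mem_erase.mp hu2.2
          rw [tw_apply_other hu2.1 hu3.1]
        rw [h1, h2, h3]
        have e1 : |m s - (y s + 1)| + 1 = |m s - y s| := by
          rcases abs_cases (m s - (y s + 1)) with ⟨a1, a2⟩ | ⟨a1, a2⟩ <;>
          rcases abs_cases (m s - y s) with ⟨b1, b2⟩ | ⟨b1, b2⟩ <;> omega
        have e2 : |m t - (y t - 1)| + 1 = |m t - y t| := by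
          rcases abs_cases (m t - (y t - 1)) with ⟨a1, a2⟩ | ⟨a1, a2⟩ <;>
          rcases abs_cases (m t - y t) with ⟨b1, b2⟩ | ⟨b1, b2⟩ <;> omega
        omega
      have hk' : ∑ u, |m u - tw y t s u| ≤ (k : ℤ) := by
        push_cast at hk ⊢
        omega
      obtain ⟨ih1, ih2⟩ := ih (tw y t s) hyB hk'
      exact ⟨decLE_trans ih1 hdec, le_trans ih2 hG⟩

end Main

/-- An element of `Ḃ(p)` minimizes the difference-sum
`Δ(z) = Σ_{s ≠ t} |z(s) − z(t)|` (over ordered pairs) over `Ḃ(p)` iff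
it is a dec-min element of `Ḃ(p)`. -/
theorem stmt14 [Fintype α] [DecidableEq α] [Nonempty α]
    (p : Finset α → ℤ) (hp : Supermodular p) (h0 : p ∅ = 0)
    (hne : (Bdot p).Nonempty)
    (m : α → ℤ) (hm : m ∈ Bdot p) :
    (∀ y ∈ Bdot p,
        ∑ q ∈ Finset.univ.offDiag, |m q.1 - m q.2| ≤
          ∑ q ∈ Finset.univ.offDiag, |y q.1 - y q.2|) ↔
      (∀ y ∈ Bdot p, DecLE m y) := by
  constructor
  · intro hD y hy
    have hns : ∀ s t : α, s ≠ t → m t + 2 ≤ m s → tw m s t ∉ Bdot p := by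
      intro s t hst hgap hmem
      have h1 := hD _ hmem
      rw [delta_eq_Gsum, delta_eq_Gsum] at h1
      exact absurd (Gsum_tw_lt hst hgap) (not_lt.mpr h1)
    exact (noStep_global hp h0 hm hns (∑ u, |m u - y u|).toNat y hy
      (Int.self_le_toNat _)).1
  · intro hdec y hy
    have hns : ∀ s t : α, s ≠ t → m t + 2 ≤ m s → tw m s t ∉ Bdot p := by
      intro s t hst hgap hmem
      have h1 := hdec _ hmem
      have h2 := sortedDesc_tw_lex hst hgap
      rcases h1 with he | hl
      · rw [he] at h2
        exact absurd h2 (irrefl_of (List.Lex (· < ·)) _)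
      · exact absurd h2 (asymm hl)
    rw [delta_eq_Gsum, delta_eq_Gsum]
    exact (noStep_global hp h0 hm hns (∑ u, |m u - y u|).toNat y hy
      (Int.self_le_toNat _)).2
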